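/- arXiv:1112.3321 — 2 statements merged into one kernel-verified Lean document; each statement's English description precedes it below -/
import Mathlib

section
/- Let n1 ≥ 3 be an odd integer and M a positive integer. Suppose p1 = ρ1 · 2^(M/w1) + 1 and p2 = ρ2 · 2^(M/w2) + 1 are primes, where w1 < w2 are odd integers ≥ 3 dividing M, ρ1, ρ2 are positive integers with n1 = ρ1^{w1} = ρ2^{w2}. Then this situation is impossible; i.e., there is at most one odd w ≥ 3 dividing M with n1 = ρ^w and ρ·2^{M/w} + 1 prime. -/
lemma root_exists (n w1 w2 ρ1 ρ2 : ℕ) (h1 : w1 ≠ 0) (h2 : w2 ≠ 0) (hn : n ≠ 0)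
    (he1 : n = ρ1 ^ w1) (he2 : n = ρ2 ^ w2) : ∃ c, n = c ^ Nat.lcm w1 w2 := by
  set L := Nat.lcm w1 w2 with hLdef
  have hL : L ≠ 0 := Nat.lcm_ne_zero h1 h2
  set c := Nat.floorRoot L n with hc
  refine ⟨c, ?_⟩
  have hcne : c ≠ 0 := Nat.floorRoot_ne_zero.2 ⟨hL, hn⟩
  have hdvd1 : c ^ L ∣ n := Nat.floorRoot_pow_dvd
  have hdvd2 : n ∣ c ^ L := by
    rw [← Nat.factorization_le_iff_dvd hn (pow_ne_zero _ hcne)]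
    intro p
    rw [Nat.factorization_pow, Finsupp.smul_apply, hc, Nat.factorization_floorRoot,
      Finsupp.floorDiv_apply, Nat.floorDiv_eq_div, smul_eq_mul]
    have hw1d : w1 ∣ n.factorization p := by
      rw [he1, Nat.factorization_pow]; exact ⟨_, rfl⟩
    have hw2d : w2 ∣ n.factorization p := by
      rw [he2, Nat.factorization_pow]; exact ⟨_, rfl⟩
    have : L ∣ n.factorization p := Nat.lcm_dvd hw1d hw2d
    rw [Nat.mul_div_cancel' this]
  exact (Nat.dvd_antisymm hdvd1 hdvd2).symm

theorem stmt2 (n1 M w1 w2 ρ1 ρ2 : ℕ)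
    (hn1 : 3 ≤ n1) (hn1odd : Odd n1) (hM : 0 < M)
    (hw1 : 3 ≤ w1) (hw2 : 3 ≤ w2) (hw1odd : Odd w1) (hw2odd : Odd w2)
    (hlt : w1 < w2) (hd1 : w1 ∣ M) (hd2 : w2 ∣ M)
    (hρ1 : 0 < ρ1) (hρ2 : 0 < ρ2)
    (he1 : n1 = ρ1 ^ w1) (he2 : n1 = ρ2 ^ w2)
    (hp1 : (ρ1 * 2 ^ (M / w1) + 1).Prime)
    (hp2 : (ρ2 * 2 ^ (M / w2) + 1).Prime) : False := by
  have hw1ne : w1 ≠ 0 := by omega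
  have hw2ne : w2 ≠ 0 := by omega
  have hn1ne : n1 ≠ 0 := by omega
  obtain ⟨c, hcL⟩ := root_exists n1 w1 w2 ρ1 ρ2 hw1ne hw2ne hn1ne he1 he2
  set L := Nat.lcm w1 w2 with hLdef
  have hLne : L ≠ 0 := Nat.lcm_ne_zero hw1ne hw2ne
  have hw1L : w1 ∣ L := Nat.dvd_lcm_left _ _
  have hw2L : w2 ∣ L := Nat.dvd_lcm_right _ _
  have hLM : L ∣ M := Nat.lcm_dvd hd1 hd2
  obtain ⟨k, hk⟩ := hLM
  have hkpos : 0 < k := by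
    rcases Nat.eq_zero_or_pos k with h | h
    · subst h; omega
    · exact h
  obtain ⟨e1, he1'⟩ := hw1L   -- L = w1 * e1
  obtain ⟨e2, he2'⟩ := hw2L   -- L = w2 * e2
  have hcpos : 0 < c := by
    rcases Nat.eq_zero_or_pos c with h | h
    · subst h; rw [zero_pow hLne] at hcL; omega
    · exact h
  -- ρ1 = c ^ e1, ρ2 = c ^ e2
  have hρ1eq : ρ1 = c ^ e1 := by
    have : ρ1 ^ w1 = (c ^ e1) ^ w1 := by
      rw [← pow_mul, mul_comm e1 w1, ← he1', ← hcL, he1]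
    exact Nat.pow_left_injective (by omega) this
  have hρ2eq : ρ2 = c ^ e2 := by
    have : ρ2 ^ w2 = (c ^ e2) ^ w2 := by
      rw [← pow_mul, mul_comm e2 w2, ← he2', ← hcL, he2]
    exact Nat.pow_left_injective (by omega) this
  -- exponents of 2 : M / w1 = e1 * k, M / w2 = e2 * k
  have hM1 : M / w1 = e1 * k := by
    rw [hk, he1', mul_assoc, Nat.mul_div_cancel_left _ (by omega : 0 < w1)]
  have hM2 : M / w2 = e2 * k := by
    rw [hk, he2', mul_assoc, Nat.mul_div_cancel_left _ (by omega : 0 < w2)]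
  set d := c * 2 ^ k with hd
  have hd2' : 2 ≤ d := by
    have : 2 ≤ 2 ^ k := Nat.one_lt_two_pow_iff.2 (by omega)
    calc 2 ≤ 1 * 2 ^ k := by omega
    _ ≤ c * 2 ^ k := Nat.mul_le_mul_right _ hcpos
  have hb1 : ρ1 * 2 ^ (M / w1) = d ^ e1 := by
    rw [hρ1eq, hM1, hd, mul_pow, pow_mul]
    congr 1
    rw [← pow_mul, ← pow_mul, mul_comm]
  have hb2 : ρ2 * 2 ^ (M / w2) = d ^ e2 := by
    rw [hρ2eq, hM2, hd, mul_pow, pow_mul]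
    congr 1
    rw [← pow_mul, ← pow_mul, mul_comm]
  -- L is odd, hence e1, e2 odd
  have hLodd : Odd L := by
    have hdvd : L ∣ w1 * w2 := Nat.lcm_dvd ⟨w2, rfl⟩ ⟨w1, mul_comm w1 w2⟩
    have hodd : Odd (w1 * w2) := Nat.odd_mul.2 ⟨hw1odd, hw2odd⟩
    rw [Nat.odd_iff] at hodd ⊢
    rcases Nat.mod_two_eq_zero_or_one L with h | h
    · exfalso
      have h2 : 2 ∣ L := Nat.dvd_of_mod_eq_zero h
      have h3 : 2 ∣ w1 * w2 := h2.trans hdvd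
      omega
    · exact h
  have he1odd : Odd e1 := (Nat.odd_mul.1 (he1' ▸ hLodd)).2
  have he2odd : Odd e2 := (Nat.odd_mul.1 (he2' ▸ hLodd)).2
  have he2pos : 0 < e2 := by
    rcases Nat.eq_zero_or_pos e2 with h | h
    · exfalso; rw [h, mul_zero] at he2'; exact hLne he2'
    · exact h
  have hee : e2 < e1 := by
    by_contra h
    push_neg at h
    have : w2 * e2 < w2 * e2 := by
      calc w2 * e2 = w1 * e1 := by rw [← he2', he1']
      _ ≤ w1 * e2 := Nat.mul_le_mul_left _ h
      _ < w2 * e2 := by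
          apply Nat.mul_lt_mul_of_lt_of_le hlt (le_refl _) (by omega)
    omega
  -- d + 1 divides p2 = d^e2 + 1, so e2 = 1
  have hdvdp2 : d + 1 ∣ d ^ e2 + 1 := by
    simpa only [one_pow] using he2odd.nat_add_dvd_pow_add_pow d 1
  rw [hb2] at hp2
  have he2one : e2 = 1 := by
    rcases (Nat.Prime.eq_one_or_self_of_dvd hp2 _ hdvdp2) with h | h
    · omega
    · have : d ^ e2 = d ^ 1 := by rw [pow_one]; omega
      exact Nat.pow_right_injective hd2' this
  have he1ge : 2 ≤ e1 := by omega
  -- d + 1 divides p1 = d^e1 + 1, contradiction with primality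
  have hdvdp1 : d + 1 ∣ d ^ e1 + 1 := by
    simpa only [one_pow] using he1odd.nat_add_dvd_pow_add_pow d 1
  rw [hb1] at hp1
  rcases (Nat.Prime.eq_one_or_self_of_dvd hp1 _ hdvdp1) with h | h
  · omega
  · have : d < d ^ e1 := by
      calc d = d ^ 1 := (pow_one d).symm
      _ < d ^ e1 := Nat.pow_lt_pow_right (by omega) (by omega)
    omega
end

section
/- If a composite number N with the Lehmer property has exactly k distinct prime factors, then 2^k divides N − 1; in particular, if N = C_n = n·2^n + 1 is a Cullen number with the Lehmer property, then 2^k ∣ n·2^n, hence k ≤ n + log₂ n. -/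
theorem stmt15 (N k : ℕ) (hN : 1 < N) (hcomp : ¬ N.Prime)
    (hlehmer : Nat.totient N ∣ N - 1) (hk : k = N.primeFactors.card) :
    2 ^ k ∣ N - 1 ∧
      ∀ n : ℕ, 0 < n → N = n * 2 ^ n + 1 →
        2 ^ k ∣ n * 2 ^ n ∧ (k : ℝ) ≤ (n : ℝ) + Real.logb 2 n := by
  subst hk
  have hN0 : N ≠ 0 := by omega
  have hN2 : N ≠ 2 := fun h => hcomp (h ▸ Nat.prime_two)
  have hodd : ¬ 2 ∣ N := by
    intro h2
    have h3 : 2 < N := by omega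
    have he : 2 ∣ N.totient := (Nat.totient_even h3).two_dvd
    have : 2 ∣ N - 1 := he.trans hlehmer
    omega
  have key : 2 ^ N.primeFactors.card ∣ N.totient := by
    rw [Nat.totient_eq_prod_factorization hN0, Finsupp.prod, Nat.support_factorization,
      ← Finset.prod_const]
    apply Finset.prod_dvd_prod_of_dvd
    intro p hp
    have hpp : p.Prime := Nat.prime_of_mem_primeFactors hp
    have hp2 : p ≠ 2 := by rintro rfl; exact hodd (Nat.dvd_of_mem_primeFactors hp)
    obtain ⟨m, hm⟩ := hpp.odd_of_ne_two hp2
    exact Dvd.dvd.mul_left ⟨m, by omega⟩ _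
  have h1 : 2 ^ N.primeFactors.card ∣ N - 1 := key.trans hlehmer
  refine ⟨h1, fun n hn hNn => ?_⟩
  have h2 : 2 ^ N.primeFactors.card ∣ n * 2 ^ n := by
    have : N - 1 = n * 2 ^ n := by omega
    rwa [this] at h1
  refine ⟨h2, ?_⟩
  set k := N.primeFactors.card
  have hle : (2 : ℕ) ^ k ≤ n * 2 ^ n := Nat.le_of_dvd (by positivity) h2
  have hleR : (2 : ℝ) ^ k ≤ (n : ℝ) * 2 ^ n := by exact_mod_cast hle
  have hnR : (0 : ℝ) < n := by exact_mod_cast hn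
  have hlog := (Real.logb_le_logb (by norm_num : (1:ℝ) < 2) (by positivity)
    (by positivity)).mpr hleR
  rw [Real.logb_mul (ne_of_gt hnR) (by positivity)] at hlog
  simp only [Real.logb_pow, Real.logb_self_eq_one (by norm_num : (1:ℝ) < 2)] at hlog
  linarith
end
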